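/- Let V be a finite GF(2)-module for L ≅ S₃ all of whose composition factors are isomorphic to the natural 2-dimensional module. Then V is a direct sum of copies of the natural module, and the number of irreducible L-submodules of V is 2^m − 1, where dim V = 2m. -/

import Mathlib

/-- The group algebra `GF(2)[S₃]`; its modules are `GF(2)`-representations of
`L ≅ L₂(2) ≅ S₃`. -/
abbrev GroupAlgS3 := MonoidAlgebra (ZMod 2) (Equiv.Perm (Fin 3))

/-- The natural 2-dimensional module for `L₂(2) ≅ S₃` over `GF(2)`: the unique
simple `GF(2)[S₃]`-module with 4 elements (the faithful irreducible one). -/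
def IsNaturalModule (M : Type*) [AddCommGroup M] [Module GroupAlgS3 M] : Prop :=
  IsSimpleModule GroupAlgS3 M ∧ Nat.card M = 4

namespace Stmt2Aux
open Equiv

def cc : Perm (Fin 3) := finRotate 3
def tt : Perm (Fin 3) := Equiv.swap 0 1

lemma cc3 : cc * cc * cc = 1 := by decide
lemma cc3' : cc * (cc * cc) = 1 := by decide
lemma ccc : (cc * cc) * (cc * cc) = cc := by decide
lemma tt2 : tt * tt = 1 := by decide
lemma conjfact : ∀ g : Perm (Fin 3),
    (cc * g = g * cc ∧ cc * cc * g = g * (cc * cc)) ∨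
    (cc * g = g * (cc * cc) ∧ cc * cc * g = g * cc) := by decide
lemma els : ∀ g : Perm (Fin 3),
    g = 1 ∨ g = cc ∨ g = cc * cc ∨ g = tt ∨ g = cc * tt ∨ g = cc * cc * tt := by decide
lemma tc : tt * cc = cc * cc * tt := by decide
lemma tcc : tt * (cc * cc) = cc * tt := by decide

noncomputable def og (g : Perm (Fin 3)) : GroupAlgS3 := MonoidAlgebra.of (ZMod 2) (Perm (Fin 3)) g

variable {M : Type*} [AddCommGroup M] [Module GroupAlgS3 M]
variable {N : Type*} [AddCommGroup N] [Module GroupAlgS3 N]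

lemma ogs (g h : Perm (Fin 3)) (x : M) : og g • og h • x = og (g * h) • x := by
  rw [← mul_smul]; unfold og; rw [← map_mul]

lemma og1 (x : M) : og 1 • x = x := by
  unfold og; rw [map_one, one_smul]

lemma two (x : M) : x + x = 0 := by
  have h1 : (1 : GroupAlgS3) + 1 = 0 := by
    rw [MonoidAlgebra.one_def, ← MonoidAlgebra.single_add]
    have h2 : (1 + 1 : ZMod 2) = 0 := rfl
    rw [h2, MonoidAlgebra.single_zero]
  calc x + x = (1 : GroupAlgS3) • x + (1 : GroupAlgS3) • x := by rw [one_smul]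
    _ = ((1 : GroupAlgS3) + 1) • x := (add_smul _ _ _).symm
    _ = 0 := by rw [h1, zero_smul]

lemma add_eq_zero_iff_eq {x y : M} : x + y = 0 ↔ x = y := by
  constructor
  · intro h
    have := congrArg (· + y) h
    simpa [add_assoc, two] using this
  · rintro rfl; exact two x

/-- closure of a predicate under the module operations -/
lemma smul_mem_aux {p : M → Prop} (h0 : p 0) (hadd : ∀ x y, p x → p y → p (x + y))
    (hg : ∀ g x, p x → p (og g • x)) : ∀ (a : GroupAlgS3) (x), p x → p (a • x) := by
  intro a
  induction a using MonoidAlgebra.induction_on with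
  | of g => exact hg g
  | add f g hf hgg =>
                       intro x hx
                       rw [add_smul]
                       exact hadd _ _ (hf x hx) (hgg x hx)
  | smul r f hf =>
      intro x hx
      rcases (by decide : ∀ r : ZMod 2, r = 0 ∨ r = 1) r with rfl | rfl
      · rw [zero_smul, zero_smul]; exact h0
      · rw [one_smul]; exact hf x hx


/-- the action of `1 + c + c²` -/
noncomputable def eta (x : M) : M := x + og cc • x + og (cc * cc) • x

lemma eta_add (x y : M) : eta (x + y) = eta x + eta y := by
  unfold eta; rw [smul_add, smul_add]; abel

lemma eta_zero : eta (0 : M) = 0 := by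
  unfold eta; rw [smul_zero, smul_zero]; abel

lemma eta_g (g : Perm (Fin 3)) (x : M) : eta (og g • x) = og g • eta x := by
  rcases conjfact g with ⟨h1, h2⟩ | ⟨h1, h2⟩ <;>
    · unfold eta
      rw [smul_add, smul_add, ogs, ogs, ogs, ogs, h1, h2]
      try abel

lemma eta_C (x : M) : og cc • eta x = eta x := by
  unfold eta
  rw [smul_add, smul_add, ogs, ogs, cc3']
  rw [og1]
  abel

lemma eta_C2 (x : M) : og (cc * cc) • eta x = eta x := by
  unfold eta
  rw [smul_add, smul_add, ogs, ogs, ccc]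
  have h1 : cc * cc * (cc * cc) = cc := ccc
  have h2 : cc * cc * cc = 1 := cc3
  rw [h2, og1]
  abel

lemma eta_eta (x : M) : eta (eta x) = eta x := by
  conv_lhs => rw [eta]
  rw [eta_C, eta_C2]
  rw [add_eq_zero_iff_eq.2 rfl, zero_add]

lemma eta_map (f : M →ₗ[GroupAlgS3] N) (x : M) : eta (f x) = f (eta x) := by
  unfold eta; rw [map_add, map_add, map_smul, map_smul]


lemma eta_zero_of_natural (hs : IsSimpleModule GroupAlgS3 M) (hc : Nat.card M = 4) :
    ∀ x : M, eta x = 0 := by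
  classical
  let K : Submodule GroupAlgS3 M :=
    { carrier := {x | eta x = 0}
      add_mem' := fun {x y} hx hy => by
        simp only [Set.mem_setOf_eq] at *
        rw [eta_add, hx, hy, add_zero]
      zero_mem' := eta_zero
      smul_mem' := fun a x hx =>
        smul_mem_aux (p := fun y : M => eta y = 0) eta_zero
          (fun x y hx hy => by show eta (x + y) = 0; rw [eta_add, hx, hy, add_zero])
          (fun g x hx => by show eta (og g • x) = 0; rw [eta_g, hx, smul_zero]) a x hx }
  rcases eq_bot_or_eq_top K with hK | hK
  swap
  · intro x
    have : x ∈ K := hK ▸ Submodule.mem_top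
    exact this
  exfalso
  have hid : ∀ x : M, eta x = x := by
    intro x
    have h1 : eta x + x ∈ K := by
      show eta (eta x + x) = 0
      rw [eta_add, eta_eta, two]
    rw [hK] at h1
    exact add_eq_zero_iff_eq.1 ((Submodule.mem_bot _).1 h1)
  have hC : ∀ x : M, og cc • x = x := by
    intro x
    have h2 := eta_C (x := x)
    rwa [hid x] at h2
  have hC2 : ∀ x : M, og (cc * cc) • x = x := fun x => by
    rw [← ogs, hC, hC]
  let F : Submodule GroupAlgS3 M :=
    { carrier := {x | og tt • x = x}
      add_mem' := fun {x y} hx hy => by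
        simp only [Set.mem_setOf_eq] at *
        rw [smul_add, hx, hy]
      zero_mem' := smul_zero _
      smul_mem' := fun a x hx => by
        refine smul_mem_aux (p := fun y : M => og tt • y = y) (smul_zero _)
          (fun x y hx hy => by show og tt • (x + y) = x + y; rw [smul_add, hx, hy]) ?_ a x hx
        intro g x hx
        have hgx : og g • x = x := by
          rcases els g with rfl | rfl | rfl | rfl | rfl | rfl
          · rw [og1]
          · rw [hC]
          · rw [hC2]
          · exact hx
          · rw [← ogs, hx, hC]
          · rw [← ogs, hx, hC2]
        rw [hgx]; exact hx }
  have hfix : ∀ x : M, og tt • x + x ∈ F := by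
    intro x
    show og tt • (og tt • x + x) = og tt • x + x
    rw [smul_add, ogs, tt2, og1]
    abel
  haveI := hs
  rcases eq_bot_or_eq_top F with hF | hF
  · have hT : ∀ x : M, og tt • x = x := by
      intro x
      have h1 := hfix x
      rw [hF] at h1
      exact add_eq_zero_iff_eq.1 ((Submodule.mem_bot _).1 h1)
    have hFt : F = ⊤ := by
      rw [Submodule.eq_top_iff']
      exact hT
    exact absurd (hF.symm.trans hFt) bot_ne_top
  have hT : ∀ x : M, og tt • x = x := fun x => by
    have : x ∈ F := hF ▸ Submodule.mem_top
    exact this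
  have hgx : ∀ g (x : M), og g • x = x := by
    intro g x
    rcases els g with rfl | rfl | rfl | rfl | rfl | rfl
    · rw [og1]
    · rw [hC]
    · rw [hC2]
    · rw [hT]
    · rw [← ogs, hT, hC]
    · rw [← ogs, hT, hC2]
  have hfin : Finite M := Nat.finite_of_card_ne_zero (by omega)
  have hnt : Nontrivial M := Finite.one_lt_card_iff_nontrivial.mp (by omega)
  obtain ⟨x, hx0⟩ := exists_ne (0 : M)
  let X : Submodule GroupAlgS3 M :=
    { carrier := {y | y = 0 ∨ y = x}
      zero_mem' := Or.inl rfl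
      add_mem' := by
        rintro a b (rfl | rfl) (rfl | rfl) <;> simp [two]
      smul_mem' := fun a y hy => by
        refine smul_mem_aux (p := fun y : M => y = 0 ∨ y = x) (Or.inl rfl) ?_ ?_ a y hy
        · rintro u v (rfl | rfl) (rfl | rfl) <;> simp [two]
        · intro g y hy
          rw [hgx]; exact hy }
  rcases eq_bot_or_eq_top X with hX | hX
  · have hmem : x ∈ X := Or.inr rfl
    rw [hX] at hmem
    exact hx0 ((Submodule.mem_bot _).1 hmem)
  · have hall : ∀ y : M, y = 0 ∨ y = x := fun y => by
      have : y ∈ X := hX ▸ Submodule.mem_top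
      exact this
    have hinj : Function.Injective (fun y : M => if y = x then true else false) := by
      intro a b hab
      rcases hall a with rfl | rfl <;> rcases hall b with rfl | rfl <;>
        simp_all
    have hle := Nat.card_le_card_of_injective _ hinj
    simp only [Nat.card_eq_fintype_card, Fintype.card_bool] at hle
    omega


lemma cc3'' : (cc * cc) * cc = 1 := by decide

section Vpart
variable {V : Type*} [AddCommGroup V] [Module GroupAlgS3 V]

lemma eta_zero_all [Finite V]
    (hcomp : ∀ W₁ W₂ : Submodule GroupAlgS3 V, W₁ ≤ W₂ →
      IsSimpleModule GroupAlgS3 (W₂ ⧸ (W₁.comap W₂.subtype)) →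
      IsNaturalModule (W₂ ⧸ (W₁.comap W₂.subtype))) :
    ∀ x : V, eta x = 0 := by
  haveI : Finite (Submodule GroupAlgS3 V) :=
    Finite.of_injective (fun W => (W : Set V)) SetLike.coe_injective
  suffices h : ∀ W : Submodule GroupAlgS3 V, ∀ x ∈ W, eta x = 0 by
    exact fun x => h ⊤ x trivial
  intro W
  induction W using WellFoundedLT.induction with
  | ind W IH =>
    rcases eq_or_ne W ⊥ with rfl | hne
    · intro x hx
      rw [(Submodule.mem_bot _).1 hx, eta_zero]
    · obtain ⟨U, hU, hmax⟩ := (Set.toFinite {U : Submodule GroupAlgS3 V | U < W}).exists_maximalFor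
        id _ ⟨⊥, bot_lt_iff_ne_bot.2 hne⟩
      simp only [Set.mem_setOf_eq, id] at hU hmax
      have hcov : U ⋖ W := by
        refine ⟨hU, fun X hUX hXW => ?_⟩
        exact absurd (hmax hXW hUX.le) (not_le_of_gt hUX)
      have hsimple := (covBy_iff_quot_is_simple hU.le).1 hcov
      have hnat := hcomp U W hU.le hsimple
      have hq := eta_zero_of_natural hnat.1 hnat.2
      intro x hx
      have hWx : eta x ∈ U := by
        have h1 : eta ((U.comap W.subtype).mkQ ⟨x, hx⟩) = 0 := hq _
        rw [eta_map] at h1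
        have h2 : eta (⟨x, hx⟩ : W) ∈ U.comap W.subtype := by
          rw [← Submodule.Quotient.mk_eq_zero]
          exact h1
        have h3 : ((eta (⟨x, hx⟩ : W) : W) : V) ∈ U := h2
        have h4 : eta x = ((eta (⟨x, hx⟩ : W) : W) : V) := eta_map W.subtype ⟨x, hx⟩
        rw [h4]
        exact h3
      have h4 := IH U hU (eta x) hWx
      rwa [eta_eta] at h4

variable (v : V)

def natSet (v : V) : Set V :=
  {y | y = 0 ∨ y = v ∨ y = og cc • v ∨ y = og (cc * cc) • v}

variable {v}

lemma natSet_c (hv : og tt • v = v) : ∀ x ∈ natSet v, og cc • x ∈ natSet v := by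
  rintro x (rfl | rfl | rfl | rfl)
  · exact Or.inl (smul_zero _)
  · exact Or.inr (Or.inr (Or.inl rfl))
  · exact Or.inr (Or.inr (Or.inr (ogs _ _ _)))
  · refine Or.inr (Or.inl ?_)
    rw [ogs, cc3', og1]

lemma natSet_t (hv : og tt • v = v) : ∀ x ∈ natSet v, og tt • x ∈ natSet v := by
  rintro x (rfl | rfl | rfl | rfl)
  · exact Or.inl (smul_zero _)
  · exact Or.inr (Or.inl hv)
  · refine Or.inr (Or.inr (Or.inr ?_))
    rw [ogs, tc, ← ogs, hv]
  · refine Or.inr (Or.inr (Or.inl ?_))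
    rw [ogs, tcc, ← ogs, hv]

lemma natSet_add (h3 : eta v = 0) : ∀ x ∈ natSet v, ∀ y ∈ natSet v, x + y ∈ natSet v := by
  have h3' : v + og cc • v + og (cc * cc) • v = 0 := h3
  have s1 : v + og cc • v = og (cc * cc) • v := add_eq_zero_iff_eq.1 h3'
  have s3 : og cc • v + og (cc * cc) • v = v := by
    rw [add_assoc] at h3'
    exact (add_eq_zero_iff_eq.1 h3').symm
  have s2 : v + og (cc * cc) • v = og cc • v := by
    have : (v + og (cc * cc) • v) + og cc • v = 0 := by rw [← h3']; abel
    exact add_eq_zero_iff_eq.1 this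
  rintro x (rfl | rfl | rfl | rfl) <;> rintro y (rfl | rfl | rfl | rfl) <;>
    simp [natSet, Set.mem_setOf_eq, two, s1, s2, s3, add_comm]


variable (v) in
/-- the natural submodule generated by a nonzero `tt`-fixed vector -/
def natSub (hv : og tt • v = v) (h3 : eta v = 0) : Submodule GroupAlgS3 V where
  carrier := natSet v
  zero_mem' := Or.inl rfl
  add_mem' := fun {a b} ha hb => natSet_add h3 a ha b hb
  smul_mem' := fun a x hx => by
    refine smul_mem_aux (p := (· ∈ natSet v)) (Or.inl rfl)
      (fun x y hx hy => natSet_add h3 x hx y hy) ?_ a x hx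
    intro g x hx
    rcases els g with rfl | rfl | rfl | rfl | rfl | rfl
    · rw [og1]; exact hx
    · exact natSet_c hv x hx
    · rw [← ogs]; exact natSet_c hv _ (natSet_c hv x hx)
    · exact natSet_t hv x hx
    · rw [← ogs]; exact natSet_c hv _ (natSet_t hv x hx)
    · rw [← ogs, ← ogs]; exact natSet_c hv _ (natSet_c hv _ (natSet_t hv x hx))

variable (hv : og tt • v = v) (h3 : eta v = 0) (hv0 : v ≠ 0)

lemma mem_natSub_self : v ∈ natSub v hv h3 := Or.inr (Or.inl rfl)

include h3 hv0 in
lemma dist1 : og cc • v ≠ v := by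
  intro h
  have h2 : og (cc * cc) • v = v := by rw [← ogs, h, h]
  have h3' : v + og cc • v + og (cc * cc) • v = 0 := h3
  rw [h, h2, two, zero_add] at h3'
  exact hv0 h3'

include h3 hv0 in
lemma dist2 : og (cc * cc) • v ≠ v := by
  intro h
  have h1 : og cc • og (cc * cc) • v = og cc • v := by rw [h]
  rw [ogs, cc3', og1] at h1
  exact dist1 h3 hv0 h1.symm

include h3 hv0 in
lemma dist3 : og cc • v ≠ og (cc * cc) • v := by
  intro h
  have h1 : og (cc * cc) • og cc • v = og (cc * cc) • og (cc * cc) • v := by rw [h]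
  rw [ogs, ogs, cc3'', ccc, og1] at h1
  exact dist1 h3 hv0 h1.symm

include hv0 in
lemma dist4 : og cc • v ≠ 0 := by
  intro h
  have h1 : og (cc * cc) • og cc • v = og (cc * cc) • (0 : V) := by rw [h]
  rw [ogs, cc3'', og1, smul_zero] at h1
  exact hv0 h1

include hv0 in
lemma dist5 : og (cc * cc) • v ≠ 0 := by
  intro h
  have h1 : og cc • og (cc * cc) • v = og cc • (0 : V) := by rw [h]
  rw [ogs, cc3', og1, smul_zero] at h1
  exact hv0 h1

include hv0 in
lemma natSub_simple : IsSimpleModule GroupAlgS3 (natSub v hv h3) := by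
  rw [isSimpleModule_iff_isAtom]
  constructor
  · intro h
    have : v ∈ natSub v hv h3 := mem_natSub_self hv h3
    rw [h] at this
    exact hv0 ((Submodule.mem_bot _).1 this)
  · intro b hb
    by_contra hbne
    obtain ⟨y, hyb, hy0⟩ := (Submodule.ne_bot_iff b).1 hbne
    have hyn : y ∈ natSub v hv h3 := hb.le hyb
    have hvb : v ∈ b := by
      rcases hyn with rfl | rfl | rfl | rfl
      · exact absurd rfl hy0
      · exact hyb
      · have := b.smul_mem (og (cc * cc)) hyb
        rwa [ogs, cc3'', og1] at this
      · have := b.smul_mem (og cc) hyb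
        rwa [ogs, cc3', og1] at this
    have hle : natSub v hv h3 ≤ b := by
      rintro z (rfl | rfl | rfl | rfl)
      · exact b.zero_mem
      · exact hvb
      · exact b.smul_mem _ hvb
      · exact b.smul_mem _ hvb
    exact hb.ne (le_antisymm hb.le hle)

include hv0 in
lemma natSub_card : Nat.card (natSub v hv h3) = 4 := by
  have hset : (natSub v hv h3 : Set V) =
      insert 0 (insert v (insert (og cc • v) {og (cc * cc) • v})) := by
    ext y
    simp only [natSub, natSet]
    rfl
  have hcoe : Nat.card (natSub v hv h3) = (natSub v hv h3 : Set V).ncard :=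
    Nat.card_coe_set_eq _
  rw [hcoe, hset]
  rw [Set.ncard_insert_of_notMem (by
        simp only [Set.mem_insert_iff, Set.mem_singleton_iff]
        push_neg
        exact ⟨Ne.symm hv0, Ne.symm (dist4 hv0), Ne.symm (dist5 hv0)⟩)]
  rw [Set.ncard_insert_of_notMem (by
        simp only [Set.mem_insert_iff, Set.mem_singleton_iff]
        push_neg
        exact ⟨Ne.symm (dist1 h3 hv0), Ne.symm (dist2 h3 hv0)⟩)]
  rw [Set.ncard_insert_of_notMem (by
        simp only [Set.mem_singleton_iff]
        exact dist3 h3 hv0)]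
  rw [Set.ncard_singleton]


lemma zero_of_c_fix {u : V} (h3 : eta u = 0) (h1 : u = og cc • u) : u = 0 := by
  have h2 : og (cc * cc) • u = u := by rw [← ogs, ← h1, ← h1]
  have h3' : u + og cc • u + og (cc * cc) • u = 0 := h3
  rw [← h1, h2, two, zero_add] at h3'
  exact h3'

lemma zero_of_c_eq {u : V} (h3 : eta u = 0) (h : og cc • u = og (cc * cc) • u) : u = 0 := by
  have h1 : og (cc * cc) • og cc • u = og (cc * cc) • og (cc * cc) • u := by rw [h]
  rw [ogs, ogs, cc3'', ccc, og1] at h1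
  exact zero_of_c_fix h3 h1

end Vpart
end Stmt2Aux


open Stmt2Aux

/-- a finite `GF(2)`-module `V` for `S₃` of dimension `2m` all of whose
composition factors (simple subquotients) are natural is a direct sum of `m` copies
of the natural module, and `V` has exactly `2^m - 1` irreducible submodules. -/
theorem stmt2 (V : Type*) [AddCommGroup V] [Module GroupAlgS3 V] (m : ℕ)
    (hV : Nat.card V = 2 ^ (2 * m))
    (hcomp : ∀ W₁ W₂ : Submodule GroupAlgS3 V, W₁ ≤ W₂ →
      IsSimpleModule GroupAlgS3 (W₂ ⧸ (W₁.comap W₂.subtype)) →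
      IsNaturalModule (W₂ ⧸ (W₁.comap W₂.subtype))) :
    (∃ D : Fin m → Submodule GroupAlgS3 V,
        DirectSum.IsInternal D ∧ ∀ i, IsNaturalModule (D i)) ∧
      Nat.card {W : Submodule GroupAlgS3 V // IsSimpleModule GroupAlgS3 W} =
        2 ^ m - 1 := by
  classical
  haveI hfin : Finite V := Nat.finite_of_card_ne_zero (by rw [hV]; positivity)
  have heta : ∀ x : V, eta x = 0 := eta_zero_all hcomp
  -- the subgroup of tt-fixed vectors
  set F : AddSubgroup V :=
    { carrier := {x | og tt • x = x}
      zero_mem' := smul_zero _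
      add_mem' := fun {x y} hx hy => by
        simp only [Set.mem_setOf_eq] at *
        rw [smul_add, hx, hy]
      neg_mem' := fun {x} hx => by
        simp only [Set.mem_setOf_eq] at *
        rw [smul_neg, hx] } with hF
  -- surjectivity of (a, b) ↦ a + c•b
  have hsurj : ∀ x : V, ∃ a b : F, x = (a : V) + og cc • (b : V) := by
    intro x
    have ha1 : og tt • (x + og tt • x) = x + og tt • x := by
      rw [smul_add, ogs, tt2, og1, add_comm]
    have k1 : og tt • og cc • x = og (cc * cc) • og tt • x := by
      rw [ogs, tc, ← ogs]
    have k2 : og tt • og (cc * cc) • og tt • x = og cc • x := by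
      rw [ogs, tcc, ← ogs, ogs tt tt, tt2, og1]
    have hb1 : og tt • (og cc • x + og (cc * cc) • og tt • x)
        = og cc • x + og (cc * cc) • og tt • x := by
      rw [smul_add, k1, k2, add_comm]
    refine ⟨⟨(x + og tt • x) + (og cc • x + og (cc * cc) • og tt • x),
        AddSubgroup.add_mem F ha1 hb1⟩, ⟨x + og tt • x, ha1⟩, ?_⟩
    have hkey := heta (og tt • x)
    have h3' : og tt • x + og cc • og tt • x + og (cc * cc) • og tt • x = 0 := hkey
    push_cast
    rw [smul_add]
    calc x = x + (og tt • x + og cc • og tt • x + og (cc * cc) • og tt • x)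
              + (og cc • x + og cc • x) := by rw [h3', two]; abel
      _ = x + og tt • x + (og cc • x + og (cc * cc) • og tt • x)
              + (og cc • x + og cc • og tt • x) := by abel
  -- injectivity
  have hzero : ∀ a b : F, (a : V) + og cc • (b : V) = 0 → a = 0 ∧ b = 0 := by
    rintro ⟨a, haf⟩ ⟨b, hbf⟩ hab
    simp only at hab
    have h1 : (a : V) = og cc • b := add_eq_zero_iff_eq.1 hab
    have h2 : og tt • a = a := haf
    have h3 : og tt • b = b := hbf
    have h4 : og cc • b = og (cc * cc) • b := by
      conv_lhs => rw [← h1, ← h2, h1, ogs, tc, ← ogs, h3]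
    have hb0 : b = 0 := zero_of_c_eq (heta b) h4
    have ha0 : a = 0 := by rw [h1, hb0, smul_zero]
    constructor <;> [skip; skip] <;> apply Subtype.ext <;> simp [ha0, hb0]
  -- the equivalence F × F ≃ V
  have hbij : Function.Bijective (fun p : F × F => (p.1 : V) + og cc • (p.2 : V)) := by
    constructor
    · rintro ⟨a, b⟩ ⟨a', b'⟩ h
      simp only at h
      have hsum : ((a + a' : F) : V) + og cc • ((b + b' : F) : V) = 0 := by
        push_cast
        rw [smul_add]
        calc (a : V) + a' + (og cc • (b : V) + og cc • (b' : V))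
            = ((a : V) + og cc • (b : V)) + ((a' : V) + og cc • (b' : V)) := by abel
          _ = 0 := by rw [h, two]
      obtain ⟨he1, he2⟩ := hzero _ _ hsum
      have he1' : (a : V) + (a' : V) = 0 := by exact_mod_cast congrArg Subtype.val he1
      have he2' : (b : V) + (b' : V) = 0 := by exact_mod_cast congrArg Subtype.val he2
      have e1 : a = a' := Subtype.ext (add_eq_zero_iff_eq.1 he1')
      have e2 : b = b' := Subtype.ext (add_eq_zero_iff_eq.1 he2')
      rw [e1, e2]
    · intro x
      obtain ⟨a, b, hx⟩ := hsurj x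
      exact ⟨⟨a, b⟩, hx.symm⟩
  have hcardF : Nat.card F = 2 ^ m := by
    have h1 : Nat.card (F × F) = Nat.card V := Nat.card_eq_of_bijective _ hbij
    rw [Nat.card_prod, hV, two_mul, pow_add] at h1
    exact Nat.mul_self_inj.1 h1
  -- ZMod 2 module structure on F
  haveI hFfin : Finite F := inferInstance
  letI : Module (ZMod 2) F := AddCommGroup.zmodModule (n := 2) (fun x => by
    apply Subtype.ext
    push_cast [two_nsmul]
    exact two (x : V))
  haveI : Module.Finite (ZMod 2) F := Module.Finite.of_finite
  letI : Fintype F := Fintype.ofFinite F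
  have hrank : Module.finrank (ZMod 2) F = m := by
    have h1 : Fintype.card F = Fintype.card (ZMod 2) ^ Module.finrank (ZMod 2) F :=
      Module.card_eq_pow_finrank
    rw [ZMod.card, ← Nat.card_eq_fintype_card, hcardF] at h1
    exact (Nat.pow_right_injective (le_refl 2) h1.symm)
  let bas : Module.Basis (Fin m) (ZMod 2) F := Module.finBasisOfFinrankEq (ZMod 2) F hrank
  -- the natural submodules
  have hbel : ∀ a : F, og tt • (a : V) = (a : V) := fun a => a.2
  have hbne : ∀ i, ((bas i : F) : V) ≠ 0 := by
    intro i h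
    exact bas.ne_zero i (Subtype.ext h)
  let D : Fin m → Submodule GroupAlgS3 V := fun i => natSub (bas i : V) (hbel _) (heta _)
  -- surjectivity of the direct-sum map
  have hDsurj : Function.Surjective (DirectSum.coeAddMonoidHom D) := by
    set R := AddMonoidHom.mrange (DirectSum.coeAddMonoidHom D) with hR
    have step0 : ∀ i (y : V), y ∈ D i → y ∈ R :=
      fun i y hy => ⟨DirectSum.of (fun i => D i) i ⟨y, hy⟩, DirectSum.coeAddMonoidHom_of _ _ _⟩
    have step1 : ∀ a : F, (a : V) ∈ R ∧ og cc • (a : V) ∈ R := by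
      intro a
      have hspan : a ∈ Submodule.span (ZMod 2) (Set.range bas) := by
        rw [bas.span_eq]; trivial
      refine Submodule.span_induction ?_ ?_ ?_ ?_ hspan
      · rintro y ⟨i, rfl⟩
        exact ⟨step0 i _ (mem_natSub_self _ _), step0 i _ (Or.inr (Or.inr (Or.inl rfl)))⟩
      · refine ⟨?_, ?_⟩
        · rw [ZeroMemClass.coe_zero]; exact R.zero_mem
        · rw [ZeroMemClass.coe_zero, smul_zero]; exact R.zero_mem
      · rintro y z _ _ ⟨hy1, hy2⟩ ⟨hz1, hz2⟩
        refine ⟨?_, ?_⟩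
        · push_cast
          exact R.add_mem hy1 hz1
        · push_cast
          rw [smul_add]
          exact R.add_mem hy2 hz2
      · rintro r y _ ⟨hy1, hy2⟩
        rcases (by decide : ∀ r : ZMod 2, r = 0 ∨ r = 1) r with rfl | rfl
        · rw [zero_smul]
          refine ⟨?_, ?_⟩
          · rw [ZeroMemClass.coe_zero]; exact R.zero_mem
          · rw [ZeroMemClass.coe_zero, smul_zero]; exact R.zero_mem
        · rw [one_smul]; exact ⟨hy1, hy2⟩
    intro x
    obtain ⟨a, b, hx⟩ := hsurj x
    have : x ∈ R := by
      rw [hx]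
      exact R.add_mem (step1 a).1 (step1 b).2
    obtain ⟨y, hy⟩ := this
    exact ⟨y, hy⟩
  -- cardinality of the direct sum
  have hDcard : Nat.card (DirectSum (Fin m) (fun i => D i)) = Nat.card V := by
    have e2 : DirectSum (Fin m) (fun i => D i) ≃ ∀ i, D i := DFinsupp.equivFunOnFintype
    rw [Nat.card_congr e2, Nat.card_pi]
    have hc4 : ∀ i, Nat.card (D i) = 4 := fun i => natSub_card (hbel _) (heta _) (hbne i)
    simp only [hc4, Finset.prod_const, Finset.card_univ, Fintype.card_fin]
    rw [hV, two_mul, ← two_mul, pow_mul]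
    norm_num
  haveI : Finite (DirectSum (Fin m) (fun i => D i)) :=
    Finite.of_equiv _ (DFinsupp.equivFunOnFintype (ι := Fin m) (β := fun i => D i)).symm
  have hinternal : DirectSum.IsInternal D :=
    (Nat.bijective_iff_surjective_and_card _).2 ⟨hDsurj, hDcard⟩
  refine ⟨⟨D, hinternal, fun i => ⟨natSub_simple _ _ (hbne i), natSub_card _ _ (hbne i)⟩⟩, ?_⟩
  -- counting the simple submodules
  have hccu : ∀ u : V, og tt • u = u → og tt • og cc • u = og (cc * cc) • u := by
    intro u hu; rw [ogs, tc, ← ogs, hu]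
  have hccu2 : ∀ u : V, og tt • u = u → og tt • og (cc * cc) • u = og cc • u := by
    intro u hu; rw [ogs, tcc, ← ogs, hu]
  let Φ : {x : F // x ≠ 0} → {W : Submodule GroupAlgS3 V // IsSimpleModule GroupAlgS3 W} :=
    fun x => ⟨natSub (x.1 : V) (hbel _) (heta _),
      natSub_simple _ _ (fun h => x.2 (Subtype.ext h))⟩
  have hΦbij : Function.Bijective Φ := by
    constructor
    · rintro ⟨u, hu0⟩ ⟨w, hw0⟩ h
      have heq : natSub (u : V) (hbel _) (heta _) = natSub (w : V) (hbel _) (heta _) :=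
        congrArg Subtype.val h
      have hwmem : (w : V) ∈ natSub (u : V) (hbel _) (heta _) := by
        rw [heq]; exact mem_natSub_self _ _
      have hwfix : og tt • (w : V) = (w : V) := hbel _
      have hune : (u : V) ≠ 0 := fun hx => hu0 (Subtype.ext hx)
      rcases hwmem with h0 | h1 | h2 | h3
      · exact absurd (Subtype.ext h0) hw0
      · exact Subtype.ext (Subtype.ext h1.symm)
      · exfalso
        rw [h2, hccu _ (hbel u)] at hwfix
        exact hune (zero_of_c_eq (heta _) hwfix.symm)
      · exfalso
        rw [h3, hccu2 _ (hbel u)] at hwfix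
        exact hune (zero_of_c_eq (heta _) hwfix)
    · rintro ⟨W, hWs⟩
      have hatom : IsAtom W := isSimpleModule_iff_isAtom.1 hWs
      obtain ⟨w, hwW, hw0⟩ := (Submodule.ne_bot_iff W).1 hatom.1
      obtain ⟨v, hvW, hvfix, hv0⟩ :
          ∃ v : V, v ∈ W ∧ og tt • v = v ∧ v ≠ 0 := by
        by_cases hu : w + og tt • w = 0
        · exact ⟨w, hwW, (add_eq_zero_iff_eq.1 hu).symm, hw0⟩
        · refine ⟨w + og tt • w, W.add_mem hwW (W.smul_mem _ hwW), ?_, hu⟩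
          rw [smul_add, ogs, tt2, og1, add_comm]
      have hle : natSub v hvfix (heta v) ≤ W := by
        rintro z (rfl | rfl | rfl | rfl)
        · exact W.zero_mem
        · exact hvW
        · exact W.smul_mem _ hvW
        · exact W.smul_mem _ hvW
      rcases lt_or_eq_of_le hle with hlt | heq
      · exfalso
        have hb := hatom.2 _ hlt
        have hmem : v ∈ natSub v hvfix (heta v) := mem_natSub_self hvfix (heta v)
        rw [hb] at hmem
        exact hv0 ((Submodule.mem_bot _).1 hmem)
      · exact ⟨⟨⟨v, hvfix⟩, fun h => hv0 (congrArg Subtype.val h)⟩,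
          Subtype.ext heq⟩
  have hcount : Nat.card {W : Submodule GroupAlgS3 V // IsSimpleModule GroupAlgS3 W}
      = Nat.card {x : F // x ≠ 0} := (Nat.card_congr (Equiv.ofBijective Φ hΦbij)).symm
  rw [hcount]
  have hsum : Nat.card F = Nat.card {x : F // x ≠ 0} + 1 := by
    have e3 := Equiv.sumCompl (fun x : F => x ≠ 0)
    rw [← Nat.card_congr e3, Nat.card_sum]
    congr 1
    haveI : Unique {x : F // ¬ x ≠ 0} :=
      ⟨⟨⟨0, by simp⟩⟩, fun y => Subtype.ext (not_ne_iff.1 y.2)⟩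
    exact Nat.card_unique
  omega
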